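/- Let I be a nonempty proper subset of [n] whose up and down interval decomposition has v(I) > 1 nested components. Then the Minkowski coefficient satisfies y_I = 0 (for any choice of the real values w_δ and z_{[n]}). -/

import Mathlib

open Finset

attribute [local instance] Classical.propDecidable

namespace AssocPaper

/-- `x` and `y` are consecutive elements of the finite set `S`. -/
def ConsecIn (S : Finset ℕ) (x y : ℕ) : Prop :=
  x ∈ S ∧ y ∈ S ∧ x < y ∧ ∀ z ∈ S, ¬ (x < z ∧ z < y)

/-- `D̄ = D ∪ {0, n+1}`. -/
def Dbar (n : ℕ) (D : Finset ℕ) : Finset ℕ := insert 0 (insert (n + 1) D)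

/-- The boundary edges of the `c`-labeled `(n+2)`-gon, given by endpoints `x < y`:
pairs of consecutive elements of `D̄`; if `U ≠ ∅` also `{0, min U}`, `{max U, n+1}` and
pairs of consecutive elements of `U`; if `U = ∅` also `{0, n+1}`. -/
def IsBoundary (n : ℕ) (D U : Finset ℕ) (x y : ℕ) : Prop :=
  ConsecIn (Dbar n D) x y
    ∨ (U.Nonempty ∧
        ((x = 0 ∧ y ∈ U ∧ ∀ u ∈ U, y ≤ u)
          ∨ (y = n + 1 ∧ x ∈ U ∧ ∀ u ∈ U, u ≤ x)
          ∨ ConsecIn U x y))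
    ∨ (U = ∅ ∧ x = 0 ∧ y = n + 1)

/-- `{x, y}` (with `x < y ≤ n+1`) is a proper diagonal: a diagonal of the
`(n+2)`-gon which is not a boundary edge. -/
def IsProper (n : ℕ) (D U : Finset ℕ) (x y : ℕ) : Prop :=
  x < y ∧ y ≤ n + 1 ∧ ¬ IsBoundary n D U x y

/-- The set `R_δ` for a proper diagonal `δ = {x,y}` with `x < y`. -/
noncomputable def Rdiag (n : ℕ) (D U : Finset ℕ) (x y : ℕ) : Finset ℕ :=
  if x ∈ U then
    (if y ∈ U then (D ∪ U.filter fun u => u ≤ x) ∪ U.filter fun u => y ≤ u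
     else D.filter (fun d => d < y) ∪ U.filter fun u => u ≤ x)
  else
    (if y ∈ U then D.filter (fun d => x < d) ∪ U.filter fun u => y ≤ u
     else D.filter fun d => x < d ∧ d < y)

/-- The extension of `R` to non-proper and degenerate diagonals `δ = {x,y}`, `x ≤ y`:
`R_δ = [n]` if `U = ∅` and `δ = {0,n+1}`; for other non-proper or degenerate `δ`,
`R_δ = ∅` if `x,y ∈ D̄` and `R_δ = [n]` otherwise. -/
noncomputable def Rext (n : ℕ) (D U : Finset ℕ) (x y : ℕ) : Finset ℕ :=
  if IsProper n D U x y then Rdiag n D U x y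
  else if U = ∅ ∧ x = 0 ∧ y = n + 1 then Finset.Icc 1 n
  else if x ∈ U ∨ y ∈ U then Finset.Icc 1 n
  else ∅

/-- The extension of the right-hand sides `z_{R_δ}` to non-proper and degenerate
diagonals, given the values `w` on proper diagonals and the value `zn = z_{[n]}`. -/
noncomputable def zext (n : ℕ) (D U : Finset ℕ) (w : ℕ × ℕ → ℝ) (zn : ℝ) (x y : ℕ) : ℝ :=
  if IsProper n D U x y then w (x, y)
  else if U = ∅ ∧ x = 0 ∧ y = n + 1 then zn
  else if x ∈ U ∨ y ∈ U then zn
  else 0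

/-- `a(I)`: the largest element of `D ∪ {0}` smaller than `min I`. -/
noncomputable def aI (D I : Finset ℕ) : ℕ :=
  ((insert 0 D).filter fun e => ∀ i ∈ I, e < i).sup id

/-- `b(I)`: the smallest element of `D ∪ {n+1}` larger than `max I`. -/
noncomputable def bI (n : ℕ) (D I : Finset ℕ) : ℕ :=
  sInf {e : ℕ | e ∈ insert (n + 1) D ∧ ∀ i ∈ I, i < e}

/-- The minimum element `γ` of `I` (junk value for `I = ∅`). -/
noncomputable def minEl (I : Finset ℕ) : ℕ := sInf {i : ℕ | i ∈ I}

/-- The maximum element `Γ` of `I` (junk value `0` for `I = ∅`). -/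
noncomputable def maxEl (I : Finset ℕ) : ℕ := I.sup id

/-- A nonempty `I ⊆ [n]` is nested if every `d ∈ D` with `a(I) < d < b(I)` lies in `I`. -/
def IsNested (n : ℕ) (D I : Finset ℕ) : Prop :=
  I.Nonempty ∧ I ⊆ Finset.Icc 1 n ∧
    ∀ d ∈ D, aI D I < d → d < bI n D I → d ∈ I

/-- The nested components of `I`: the inclusion-maximal nested subsets of `I`. -/
noncomputable def nestedComponents (n : ℕ) (D I : Finset ℕ) : Finset (Finset ℕ) :=
  I.powerset.filter fun J =>
    IsNested n D J ∧ ∀ K ∈ I.powerset, IsNested n D K → J ⊆ K → J = K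

/-- `v(I)`: the number of nested components of `I`. -/
noncomputable def vI (n : ℕ) (D I : Finset ℕ) : ℕ := (nestedComponents n D I).card

/-- `x` is the last element of one of the up intervals of `J`
(an element of `J ∩ U` whose successor in `U`, if any, is not in `J`). -/
def IsRunEnd (U J : Finset ℕ) (x : ℕ) : Prop :=
  x ∈ J ∧ x ∈ U ∧ ∀ y, ConsecIn U x y → y ∉ J

/-- `y` is the first element of one of the up intervals of `J`
(an element of `J ∩ U` whose predecessor in `U`, if any, is not in `J`). -/
def IsRunStart (U J : Finset ℕ) (y : ℕ) : Prop :=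
  y ∈ J ∧ y ∈ U ∧ ∀ x, ConsecIn U x y → x ∉ J

/-- `{x,y}` is one of the diagonals `δ_1(J), …, δ_{w+1}(J)` associated to a nested
set `J` with `a = a(J)`, `b = b(J)` and up intervals `[α_1,β_1]_U, …, [α_w,β_w]_U`,
namely `{a,α_1}, {β_1,α_2}, …, {β_w,b}` (and `{a,b}` when `w = 0`). -/
def AssocDiag (n : ℕ) (D U J : Finset ℕ) (x y : ℕ) : Prop :=
  x < y ∧ (x = aI D J ∨ IsRunEnd U J x) ∧ (y = bI n D J ∨ IsRunStart U J y) ∧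
    ∀ u ∈ J ∩ U, ¬ (x < u ∧ u < y)

/-- `W(J)`: the proper diagonals among the diagonals associated to the nested set `J`. -/
noncomputable def WJ (n : ℕ) (D U J : Finset ℕ) : Finset (ℕ × ℕ) :=
  (Finset.range (n + 2) ×ˢ Finset.range (n + 2)).filter fun p =>
    AssocDiag n D U J p.1 p.2 ∧ IsProper n D U p.1 p.2

/-- The tight value `z^c_I = ∑_i ( ∑_{j ∈ W(J_i)} w_{δ_j(J_i)} − (|W(J_i)|−1)·z_{[n]} )`,
the sum running over the nested components `J_i` of `I` (so `z^c_∅ = 0`). -/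
noncomputable def zc (n : ℕ) (D U : Finset ℕ) (w : ℕ × ℕ → ℝ) (zn : ℝ) (I : Finset ℕ) : ℝ :=
  ∑ J ∈ nestedComponents n D I,
    ((∑ p ∈ WJ n D U J, w p) - (((WJ n D U J).card : ℝ) - 1) * zn)

/-- The Minkowski coefficient `y_I = ∑_{J ⊆ I} (−1)^{|I∖J|} z^c_J`. -/
noncomputable def yI (n : ℕ) (D U : Finset ℕ) (w : ℕ × ℕ → ℝ) (zn : ℝ) (I : Finset ℕ) : ℝ :=
  ∑ J ∈ I.powerset, (-1 : ℝ) ^ (I \ J).card * zc n D U w zn J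

/-- The associahedron right-hand sides `w_δ = |R_δ|·(|R_δ|+1)/2`. -/
noncomputable def wAs (n : ℕ) (D U : Finset ℕ) (p : ℕ × ℕ) : ℝ :=
  (((Rdiag n D U p.1 p.2).card : ℝ) * (((Rdiag n D U p.1 p.2).card : ℝ) + 1)) / 2

/-- The associahedron value `z_{[n]} = n(n+1)/2`. -/
noncomputable def znAs (n : ℕ) : ℝ := ((n : ℝ) * ((n : ℝ) + 1)) / 2


section Aux

lemma aI_lt_of_mem {n : ℕ} {D I : Finset ℕ} (hsub : I ⊆ Finset.Icc 1 n) {i : ℕ}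
    (hi : i ∈ I) : aI D I < i := by
  have h0 : 0 < i := by
    have := hsub hi; rw [Finset.mem_Icc] at this; omega
  unfold aI
  rw [Finset.sup_lt_iff (by exact h0)]
  intro e he
  rw [Finset.mem_filter] at he
  exact he.2 i hi

lemma le_aI {D I : Finset ℕ} {e : ℕ} (he : e ∈ insert 0 D) (h : ∀ i ∈ I, e < i) :
    e ≤ aI D I :=
  Finset.le_sup (f := id) (Finset.mem_filter.mpr ⟨he, h⟩)

lemma lt_bI {n : ℕ} {D I : Finset ℕ} (hsub : I ⊆ Finset.Icc 1 n) {i : ℕ} (hi : i ∈ I) :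
    i < bI n D I := by
  have hne : {e : ℕ | e ∈ insert (n + 1) D ∧ ∀ i ∈ I, i < e}.Nonempty := by
    refine ⟨n + 1, Finset.mem_insert_self _ _, fun j hj => ?_⟩
    have := hsub hj; rw [Finset.mem_Icc] at this; omega
  exact (Nat.sInf_mem hne).2 i hi

lemma bI_le {n : ℕ} {D I : Finset ℕ} {e : ℕ} (he : e ∈ insert (n + 1) D)
    (h : ∀ i ∈ I, i < e) : bI n D I ≤ e :=
  Nat.sInf_le ⟨he, h⟩

lemma nested_side {n : ℕ} {D I : Finset ℕ} {d : ℕ} (hd : d ∈ D) (hdI : d ∉ I)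
    {K : Finset ℕ} (hK : IsNested n D K) (hKI : K ⊆ I) :
    (∀ k ∈ K, k < d) ∨ (∀ k ∈ K, d < k) := by
  by_contra hcon
  push_neg at hcon
  obtain ⟨⟨k1, hk1, hk1d⟩, k2, hk2, hk2d⟩ := hcon
  have h1 : d < k1 := by
    rcases lt_or_eq_of_le hk1d with h | h
    · exact h
    · exact absurd (h ▸ hKI hk1) hdI
  have h2 : k2 < d := by
    rcases lt_or_eq_of_le hk2d with h | h
    · exact h
    · exact absurd (h.symm ▸ hKI hk2) hdI
  have ha : aI D K < d := lt_trans (aI_lt_of_mem hK.2.1 hk2) h2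
  have hb : d < bI n D K := lt_trans h1 (lt_bI hK.2.1 hk1)
  exact hdI (hKI (hK.2.2 d hd ha hb))

lemma comps_split {n : ℕ} {D I : Finset ℕ} {d : ℕ} (hd : d ∈ D) (hdI : d ∉ I)
    {J : Finset ℕ} (hJ : J ⊆ I) :
    nestedComponents n D J =
      nestedComponents n D (J.filter (· < d)) ∪ nestedComponents n D (J.filter (d < ·)) := by
  ext K
  simp only [nestedComponents, Finset.mem_union, Finset.mem_filter, Finset.mem_powerset]
  constructor
  · rintro ⟨hKJ, hK, hmax⟩
    rcases nested_side hd hdI hK (hKJ.trans hJ) with hside | hside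
    · left
      refine ⟨fun k hk => Finset.mem_filter.mpr ⟨hKJ hk, hside k hk⟩, hK, ?_⟩
      intro K' hK' hK'n hKK'
      exact hmax K' (hK'.trans (Finset.filter_subset _ _)) hK'n hKK'
    · right
      refine ⟨fun k hk => Finset.mem_filter.mpr ⟨hKJ hk, hside k hk⟩, hK, ?_⟩
      intro K' hK' hK'n hKK'
      exact hmax K' (hK'.trans (Finset.filter_subset _ _)) hK'n hKK'
  · rintro (⟨hKJ, hK, hmax⟩ | ⟨hKJ, hK, hmax⟩)
    · refine ⟨hKJ.trans (Finset.filter_subset _ _), hK, ?_⟩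
      intro K' hK' hK'n hKK'
      obtain ⟨k0, hk0⟩ := hK.1
      have hk0d : k0 < d := (Finset.mem_filter.mp (hKJ hk0)).2
      have hside : ∀ k ∈ K', k < d := by
        rcases nested_side hd hdI hK'n (hK'.trans hJ) with hs | hs
        · exact hs
        · exact absurd (hs k0 (hKK' hk0)) (by omega)
      exact hmax K' (fun k hk => Finset.mem_filter.mpr ⟨hK' hk, hside k hk⟩) hK'n hKK'
    · refine ⟨hKJ.trans (Finset.filter_subset _ _), hK, ?_⟩
      intro K' hK' hK'n hKK'
      obtain ⟨k0, hk0⟩ := hK.1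
      have hk0d : d < k0 := (Finset.mem_filter.mp (hKJ hk0)).2
      have hside : ∀ k ∈ K', d < k := by
        rcases nested_side hd hdI hK'n (hK'.trans hJ) with hs | hs
        · exact absurd (hs k0 (hKK' hk0)) (by omega)
        · exact hs
      exact hmax K' (fun k hk => Finset.mem_filter.mpr ⟨hK' hk, hside k hk⟩) hK'n hKK'

lemma comps_disjoint {n : ℕ} {D : Finset ℕ} {d : ℕ} {J : Finset ℕ} :
    Disjoint (nestedComponents n D (J.filter (· < d)))
      (nestedComponents n D (J.filter (d < ·))) := by
  rw [Finset.disjoint_left]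
  intro K hK1 hK2
  simp only [nestedComponents, Finset.mem_filter, Finset.mem_powerset] at hK1 hK2
  obtain ⟨k0, hk0⟩ := hK1.2.1.1
  have h1 := (Finset.mem_filter.mp (hK1.1 hk0)).2
  have h2 := (Finset.mem_filter.mp (hK2.1 hk0)).2
  omega

lemma zc_split {n : ℕ} {D U I : Finset ℕ} {w : ℕ × ℕ → ℝ} {zn : ℝ} {d : ℕ}
    (hd : d ∈ D) (hdI : d ∉ I) {J : Finset ℕ} (hJ : J ⊆ I) :
    zc n D U w zn J = zc n D U w zn (J.filter (· < d)) + zc n D U w zn (J.filter (d < ·)) := by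
  unfold zc
  rw [comps_split hd hdI hJ, Finset.sum_union comps_disjoint]

lemma neg_one_pow_sdiff {A S : Finset ℕ} (h : S ⊆ A) :
    ((-1 : ℝ)) ^ (A \ S).card = (-1) ^ A.card * (-1) ^ S.card := by
  have hc : (A \ S).card + S.card = A.card := by
    rw [Finset.card_sdiff_of_subset h]
    have := Finset.card_le_card h
    omega
  calc ((-1 : ℝ)) ^ (A \ S).card
      = (-1 : ℝ) ^ (A \ S).card * ((-1) ^ S.card * (-1) ^ S.card) := by
        rw [← pow_add]
        have : Even (S.card + S.card) := ⟨S.card, rfl⟩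
        rw [this.neg_one_pow, mul_one]
    _ = (-1 : ℝ) ^ ((A \ S).card + S.card) * (-1) ^ S.card := by rw [pow_add, mul_assoc]
    _ = (-1) ^ A.card * (-1) ^ S.card := by rw [hc]

lemma alt_sum_zero {A : Finset ℕ} (hA : A.Nonempty) :
    ∑ S ∈ A.powerset, ((-1 : ℝ)) ^ (A \ S).card = 0 := by
  have hz : (∑ m ∈ A.powerset, (-1 : ℤ) ^ m.card) = 0 :=
    Finset.sum_powerset_neg_one_pow_card_of_nonempty hA
  calc ∑ S ∈ A.powerset, ((-1 : ℝ)) ^ (A \ S).card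
      = ∑ S ∈ A.powerset, (-1 : ℝ) ^ A.card * (-1) ^ S.card :=
        Finset.sum_congr rfl fun S hS => neg_one_pow_sdiff (Finset.mem_powerset.mp hS)
    _ = (-1 : ℝ) ^ A.card * ∑ S ∈ A.powerset, (-1 : ℝ) ^ S.card := by rw [Finset.mul_sum]
    _ = 0 := by
        have : ∑ S ∈ A.powerset, (-1 : ℝ) ^ S.card
            = ((∑ m ∈ A.powerset, (-1 : ℤ) ^ m.card : ℤ) : ℝ) := by push_cast; rfl
        rw [this, hz]; simp

end Aux


/-- if the nonempty proper subset `I` of `[n]` has more than one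
nested component, then `y_I = 0`, for any right-hand sides `w` and `z_{[n]}`. -/
theorem statement12 (n : ℕ) (D U : Finset ℕ) (hn : 2 ≤ n)
    (hDU : D ∪ U = Finset.Icc 1 n) (hdisj : Disjoint D U) (h1D : 1 ∈ D) (hnD : n ∈ D)
    (w : ℕ × ℕ → ℝ) (zn : ℝ)
    (I : Finset ℕ) (hne : I.Nonempty) (hsub : I ⊆ Finset.Icc 1 n)
    (hpropersub : I ≠ Finset.Icc 1 n)
    (hv : 1 < vI n D I) :
    yI n D U w zn I = 0 := by
  -- I is not nested, since it has more than one nested component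
  have hInotnested : ¬ IsNested n D I := by
    intro hIn
    have hcomp : nestedComponents n D I = {I} := by
      ext K
      simp only [nestedComponents, Finset.mem_filter, Finset.mem_powerset,
        Finset.mem_singleton]
      constructor
      · rintro ⟨hKI, hK, hmax⟩
        exact hmax I subset_rfl hIn hKI
      · rintro rfl
        exact ⟨subset_rfl, hIn, fun K' hK' _ hIK' => subset_antisymm hIK' hK'⟩
    have hv1 : vI n D I = 1 := by rw [vI, hcomp, Finset.card_singleton]
    omega
  obtain ⟨d, hdD, hda, hdb, hdI⟩ : ∃ d ∈ D, aI D I < d ∧ d < bI n D I ∧ d ∉ I := by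
    by_contra hcon
    push_neg at hcon
    exact hInotnested ⟨hne, hsub, fun e he h1 h2 => hcon e he h1 h2⟩
  set A := I.filter (· < d) with hA
  set B := I.filter (d < ·) with hB
  have hAsub : A ⊆ I := Finset.filter_subset _ _
  have hBsub : B ⊆ I := Finset.filter_subset _ _
  have hABdisj : Disjoint A B := by
    rw [Finset.disjoint_left]
    intro x hx1 hx2
    rw [hA, Finset.mem_filter] at hx1
    rw [hB, Finset.mem_filter] at hx2
    omega
  have hABunion : A ∪ B = I := by
    ext x
    simp only [Finset.mem_union, hA, hB, Finset.mem_filter]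
    constructor
    · rintro (⟨h, _⟩ | ⟨h, _⟩) <;> exact h
    · intro hx
      have hxd : x ≠ d := fun h => hdI (h ▸ hx)
      rcases lt_trichotomy x d with h | h | h
      · exact Or.inl ⟨hx, h⟩
      · exact absurd h hxd
      · exact Or.inr ⟨hx, h⟩
  have hAne : A.Nonempty := by
    by_contra hemp
    rw [Finset.not_nonempty_iff_eq_empty, Finset.filter_eq_empty_iff] at hemp
    have hle : d ≤ aI D I := by
      refine le_aI (Finset.mem_insert_of_mem hdD) (fun i hi => ?_)
      have h1 := hemp hi
      have h2 : i ≠ d := fun h => hdI (h ▸ hi)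
      omega
    omega
  have hBne : B.Nonempty := by
    by_contra hemp
    rw [Finset.not_nonempty_iff_eq_empty, Finset.filter_eq_empty_iff] at hemp
    have hle : bI n D I ≤ d := by
      refine bI_le (Finset.mem_insert_of_mem hdD) (fun i hi => ?_)
      have h1 := hemp hi
      have h2 : i ≠ d := fun h => hdI (h ▸ hi)
      omega
    omega
  have hfilter_inter : ∀ J : Finset ℕ, J ⊆ I →
      J.filter (· < d) = J ∩ A ∧ J.filter (d < ·) = J ∩ B := by
    intro J hJ
    constructor
    · ext x
      simp only [Finset.mem_filter, Finset.mem_inter, hA]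
      exact ⟨fun h => ⟨h.1, hJ h.1, h.2⟩, fun h => ⟨h.1, h.2.2⟩⟩
    · ext x
      simp only [Finset.mem_filter, Finset.mem_inter, hB]
      exact ⟨fun h => ⟨h.1, hJ h.1, h.2⟩, fun h => ⟨h.1, h.2.2⟩⟩
  set Z := zc n D U w zn with hZ
  have step1 : yI n D U w zn I =
      ∑ p ∈ A.powerset ×ˢ B.powerset,
        (-1 : ℝ) ^ (A \ p.1).card * ((-1 : ℝ) ^ (B \ p.2).card * (Z p.1 + Z p.2)) := by
    unfold yI
    refine Finset.sum_nbij' (i := fun J => (J ∩ A, J ∩ B)) (j := fun p => p.1 ∪ p.2)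
      ?_ ?_ ?_ ?_ ?_
    · intro J hJ
      rw [Finset.mem_product]
      exact ⟨Finset.mem_powerset.mpr Finset.inter_subset_right,
        Finset.mem_powerset.mpr Finset.inter_subset_right⟩
    · intro p hp
      rw [Finset.mem_product] at hp
      exact Finset.mem_powerset.mpr
        (Finset.union_subset ((Finset.mem_powerset.mp hp.1).trans hAsub)
          ((Finset.mem_powerset.mp hp.2).trans hBsub))
    · intro J hJ
      show J ∩ A ∪ J ∩ B = J
      rw [← Finset.inter_union_distrib_left, hABunion,
        Finset.inter_eq_left.mpr (Finset.mem_powerset.mp hJ)]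
    · intro p hp
      rw [Finset.mem_product] at hp
      have h1 := Finset.mem_powerset.mp hp.1
      have h2 := Finset.mem_powerset.mp hp.2
      have hTA : p.2 ∩ A = ∅ :=
        Finset.disjoint_iff_inter_eq_empty.mp (hABdisj.symm.mono_left h2)
      have hSB : p.1 ∩ B = ∅ :=
        Finset.disjoint_iff_inter_eq_empty.mp (hABdisj.mono_left h1)
      ext <;> simp only [Finset.union_inter_distrib_right]
      · rw [Finset.inter_eq_left.mpr h1, hTA, Finset.union_empty]
      · rw [Finset.inter_eq_left.mpr h2, hSB, Finset.empty_union]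
    · intro J hJmem
      have hJ := Finset.mem_powerset.mp hJmem
      obtain ⟨hfA, hfB⟩ := hfilter_inter J hJ
      have hzsplit : Z J = Z (J ∩ A) + Z (J ∩ B) := by
        rw [hZ, ← hfA, ← hfB]
        exact zc_split hdD hdI hJ
      have hcard : (I \ J).card = (A \ (J ∩ A)).card + (B \ (J ∩ B)).card := by
        have heq : I \ J = (A \ (J ∩ A)) ∪ (B \ (J ∩ B)) := by
          ext x
          simp only [Finset.mem_sdiff, Finset.mem_union, Finset.mem_inter]
          constructor
          · rintro ⟨hxI, hxJ⟩
            rcases Finset.mem_union.mp (hABunion ▸ hxI : x ∈ A ∪ B) with h | h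
            · exact Or.inl ⟨h, fun hc => hxJ hc.1⟩
            · exact Or.inr ⟨h, fun hc => hxJ hc.1⟩
          · rintro (⟨hxA, hx⟩ | ⟨hxB, hx⟩)
            · exact ⟨hAsub hxA, fun hc => hx ⟨hc, hxA⟩⟩
            · exact ⟨hBsub hxB, fun hc => hx ⟨hc, hxB⟩⟩
        rw [heq, Finset.card_union_of_disjoint
          (hABdisj.mono Finset.sdiff_subset Finset.sdiff_subset)]
      show (-1 : ℝ) ^ (I \ J).card * Z J
          = (-1 : ℝ) ^ (A \ (J ∩ A)).card *
            ((-1 : ℝ) ^ (B \ (J ∩ B)).card * (Z (J ∩ A) + Z (J ∩ B)))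
      rw [hzsplit, hcard, pow_add]
      ring
  rw [step1, Finset.sum_product]
  have hinner : ∀ S ∈ A.powerset,
      ∑ T ∈ B.powerset, (-1 : ℝ) ^ (A \ S).card * ((-1 : ℝ) ^ (B \ T).card * (Z S + Z T))
        = (-1 : ℝ) ^ (A \ S).card * ∑ T ∈ B.powerset, (-1 : ℝ) ^ (B \ T).card * Z T := by
    intro S _
    rw [← Finset.mul_sum]
    congr 1
    simp only [mul_add, Finset.sum_add_distrib]
    rw [← Finset.sum_mul, alt_sum_zero hBne, zero_mul, zero_add]
  rw [Finset.sum_congr rfl hinner, ← Finset.sum_mul, alt_sum_zero hAne, zero_mul]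


end AssocPaper
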